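/- Let O(Q₂) = {g ∈ GL₆(ℤ) : Q₂(g·v) = Q₂(v) for all v ∈ ℤ⁶} and let T₁ = {v ∈ ℤ⁶ : Q₂(v) ∈ 2ℤ} be the even sublattice. Every g ∈ O(Q₂) maps T₁ onto T₁, and the restriction map g ↦ g|_{T₁} is a group isomorphism from O(Q₂) onto the group of all ℤ-module automorphisms h of T₁ satisfying B₂(h(v), h(w)) = B₂(v,w) for all v, w ∈ T₁. In particular, every isometry of the even sublattice T₁ extends uniquely to an isometry of (ℤ⁶, Q₂). -/

import Mathlib

/-- The quadratic form `Q₂(x) = x₁² + x₂² − x₃² − x₄² − x₅² − x₆²` on `ℤ⁶`. -/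
def Q2 (v : Fin 6 → ℤ) : ℤ :=
  v 0 ^ 2 + v 1 ^ 2 - v 2 ^ 2 - v 3 ^ 2 - v 4 ^ 2 - v 5 ^ 2

/-- The bilinear form `B₂` on `ℤ⁶`. -/
def B2 (v w : Fin 6 → ℤ) : ℤ :=
  v 0 * w 0 + v 1 * w 1 - v 2 * w 2 - v 3 * w 3 - v 4 * w 4 - v 5 * w 5

/-- `O(Q₂)`, the subgroup of `GL₆(ℤ)` preserving `Q₂`. -/
def OQ2 : Subgroup (Matrix (Fin 6) (Fin 6) ℤ)ˣ where
  carrier := {g | ∀ v, Q2 ((g : Matrix (Fin 6) (Fin 6) ℤ).mulVec v) = Q2 v}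
  one_mem' := by intro v; simp
  mul_mem' := by
    intro a b ha hb v
    rw [Units.val_mul, ← Matrix.mulVec_mulVec]
    rw [ha, hb]
  inv_mem' := by
    intro a ha v
    have h1 : (a : Matrix (Fin 6) (Fin 6) ℤ).mulVec
        ((↑a⁻¹ : Matrix (Fin 6) (Fin 6) ℤ).mulVec v) = v := by
      rw [Matrix.mulVec_mulVec, ← Units.val_mul, mul_inv_cancel, Units.val_one,
        Matrix.one_mulVec]
    have := ha ((↑a⁻¹ : Matrix (Fin 6) (Fin 6) ℤ).mulVec v)
    rw [h1] at this
    exact this.symm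

/-- The even sublattice `T₁ = {v ∈ ℤ⁶ : Q₂(v) ∈ 2ℤ}`, as a `ℤ`-submodule. -/
def T1 : Submodule ℤ (Fin 6 → ℤ) where
  carrier := {v | ∃ n : ℤ, Q2 v = 2 * n}
  zero_mem' := ⟨0, by simp [Q2]⟩
  add_mem' := by
    rintro a b ⟨m, hm⟩ ⟨n, hn⟩
    exact ⟨m + n + B2 a b, by
      simp only [Q2, B2, Pi.add_apply] at *
      linear_combination hm + hn⟩
  smul_mem' := by
    rintro c a ⟨n, hn⟩
    exact ⟨c ^ 2 * n, by
      simp only [Q2, Pi.smul_apply, smul_eq_mul] at *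
      linear_combination (c ^ 2) * hn⟩

/-- The group of `ℤ`-module automorphisms of `T₁` preserving `B₂`. -/
def IsomT1 : Subgroup (T1 ≃ₗ[ℤ] T1) where
  carrier := {h | ∀ v w : T1, B2 (h v) (h w) = B2 v w}
  one_mem' := by intro v w; rfl
  mul_mem' := by
    intro a b ha hb v w
    have h : ∀ x : T1, (a * b) x = a (b x) := fun _ => rfl
    rw [h v, h w, ha, hb]
  inv_mem' := by
    intro a ha v w
    have h : ∀ x : T1, a (a⁻¹ x) = x := fun x => a.apply_symm_apply x
    calc B2 (a⁻¹ v) (a⁻¹ w) = B2 (a (a⁻¹ v)) (a (a⁻¹ w)) := (ha _ _).symm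
      _ = B2 v w := by rw [h v, h w]
section Aux
open Matrix

lemma Q2_add (v w : Fin 6 → ℤ) : Q2 (v + w) = Q2 v + 2 * B2 v w + Q2 w := by
  simp only [Q2, B2, Pi.add_apply]; ring

lemma B2_smul_right (c : ℤ) (v w : Fin 6 → ℤ) : B2 v (c • w) = c * B2 v w := by
  simp only [B2, Pi.smul_apply, smul_eq_mul]; ring

lemma Q2_smul (c : ℤ) (v : Fin 6 → ℤ) : Q2 (c • v) = c ^ 2 * Q2 v := by
  simp only [Q2, Pi.smul_apply, smul_eq_mul]; ring

lemma Q2_eq_B2 (v : Fin 6 → ℤ) : Q2 v = B2 v v := by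
  simp only [Q2, B2]; ring

lemma mem_T1_iff (v : Fin 6 → ℤ) : v ∈ T1 ↔ (2:ℤ) ∣ Q2 v := Iff.rfl

lemma mem_T1_zmod (v : Fin 6 → ℤ) : v ∈ T1 ↔ ((Q2 v : ZMod 2) = 0) := by
  rw [mem_T1_iff]
  have := ZMod.intCast_zmod_eq_zero_iff_dvd (Q2 v) 2
  norm_num at this
  exact this.symm

lemma zmod2_Q2 (v : Fin 6 → ℤ) :
    ((Q2 v : ZMod 2)) = ((v 0 + v 1 + v 2 + v 3 + v 4 + v 5 : ℤ) : ZMod 2) := by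
  have h2 : (2 : ZMod 2) = 0 := by decide
  have hp : ∀ a : ZMod 2, a ^ 2 = a := fun a => ZMod.pow_card a
  simp only [Q2]
  push_cast
  rw [hp, hp, hp, hp, hp, hp]
  linear_combination (-(((v 2 : ZMod 2)) + ((v 3 : ZMod 2)) + ((v 4 : ZMod 2)) + ((v 5 : ZMod 2)))) * h2

lemma B2_mulVec (g : OQ2) (v w : Fin 6 → ℤ) :
    B2 (((g : (Matrix (Fin 6) (Fin 6) ℤ)ˣ) : Matrix (Fin 6) (Fin 6) ℤ).mulVec v)
       (((g : (Matrix (Fin 6) (Fin 6) ℤ)ˣ) : Matrix (Fin 6) (Fin 6) ℤ).mulVec w) = B2 v w := by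
  have h1 := g.2 (v + w)
  have h2 := g.2 v
  have h3 := g.2 w
  rw [Matrix.mulVec_add, Q2_add, Q2_add] at h1
  rw [h2, h3] at h1
  linarith

lemma mulVec_mem_T1 (g : OQ2) {v : Fin 6 → ℤ} (hv : v ∈ T1) :
    ((g : (Matrix (Fin 6) (Fin 6) ℤ)ˣ) : Matrix (Fin 6) (Fin 6) ℤ).mulVec v ∈ T1 := by
  obtain ⟨n, hn⟩ := hv
  exact ⟨n, by rw [g.2 v]; exact hn⟩

end Aux
section Ext
open Matrix

/-- First standard basis vector. -/
def e1vec : Fin 6 → ℤ := fun i => if i = 0 then 1 else 0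

lemma B2_e1 (v : Fin 6 → ℤ) : B2 v e1vec = v 0 := by
  simp [B2, e1vec]

lemma Q2_e1 : Q2 e1vec = 1 := by simp [Q2, e1vec]

/-- `2·e₁` as an element of `T₁`. -/
def te1 : T1 := ⟨(2:ℤ) • e1vec, ⟨2, by simp [Q2, e1vec, Pi.smul_apply]⟩⟩

/-- The coordinate-sum linear functional. -/
def sL : (Fin 6 → ℤ) →ₗ[ℤ] ℤ where
  toFun v := v 0 + v 1 + v 2 + v 3 + v 4 + v 5
  map_add' v w := by simp only [Pi.add_apply]; ring
  map_smul' c v := by simp only [Pi.smul_apply, smul_eq_mul, RingHom.id_apply]; ring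

lemma sub_sL_mem (v : Fin 6 → ℤ) : v - sL v • e1vec ∈ T1 := by
  rw [mem_T1_zmod, zmod2_Q2]
  have h : (v - sL v • e1vec) 0 + (v - sL v • e1vec) 1 + (v - sL v • e1vec) 2 +
      (v - sL v • e1vec) 3 + (v - sL v • e1vec) 4 + (v - sL v • e1vec) 5 = 0 := by
    simp only [Pi.sub_apply, Pi.smul_apply, smul_eq_mul, e1vec, sL, LinearMap.coe_mk,
      AddHom.coe_mk]
    norm_num [show ((1:Fin 6) = 0) ↔ False from by decide, show ((2:Fin 6) = 0) ↔ False from by decide,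
      show ((3:Fin 6) = 0) ↔ False from by decide, show ((4:Fin 6) = 0) ↔ False from by decide,
      show ((5:Fin 6) = 0) ↔ False from by decide]
    ring
  rw [h]
  simp

/-- Projection of `ℤ⁶` onto `T₁` along `e₁`. -/
def tL : (Fin 6 → ℤ) →ₗ[ℤ] T1 where
  toFun v := ⟨v - sL v • e1vec, sub_sL_mem v⟩
  map_add' v w := by
    apply Subtype.ext
    simp only [map_add, Submodule.coe_add]
    rw [add_smul]
    abel
  map_smul' c v := by
    apply Subtype.ext
    simp only [_root_.map_smul, RingHom.id_apply, SetLike.val_smul, smul_eq_mul]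
    rw [smul_sub, ← mul_smul]

lemma tL_coe (v : Fin 6 → ℤ) : ((tL v : T1) : Fin 6 → ℤ) = v - sL v • e1vec := rfl

/-- Half of `h(2e₁)`. -/
def uvec (h : T1 ≃ₗ[ℤ] T1) : Fin 6 → ℤ := fun i => ((h te1 : T1) : Fin 6 → ℤ) i / 2

/-- The candidate extension of `h` to `ℤ⁶`. -/
def gL (h : T1 ≃ₗ[ℤ] T1) : (Fin 6 → ℤ) →ₗ[ℤ] (Fin 6 → ℤ) :=
  T1.subtype ∘ₗ (h : T1 →ₗ[ℤ] T1) ∘ₗ tL + sL.smulRight (uvec h)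

lemma gL_apply (h : T1 ≃ₗ[ℤ] T1) (v : Fin 6 → ℤ) :
    gL h v = ((h (tL v) : T1) : Fin 6 → ℤ) + sL v • uvec h := rfl

end Ext
section Even
open Matrix

lemma odd_sq_mod8 {x : ℤ} (hx : ¬ (2:ℤ) ∣ x) : ∃ k : ℤ, x ^ 2 - 1 = 8 * k := by
  obtain ⟨k, hk⟩ : Odd x := by
    rcases Int.even_or_odd x with he | ho
    · obtain ⟨c, hc⟩ := he
      exact absurd ⟨c, by omega⟩ hx
    · exact ho
  obtain ⟨m, hm⟩ : Even (k * (k + 1)) := Int.even_mul_succ_self k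
  exact ⟨m, by subst hk; linear_combination 4 * hm⟩

/-- `i`-th standard basis vector. -/
def evec (i : Fin 6) : Fin 6 → ℤ := fun j => if j = i then 1 else 0

lemma B2_w_even {h : T1 ≃ₗ[ℤ] T1} (hB : ∀ v w : T1, B2 (h v) (h w) = B2 v w)
    (t : T1) : (2:ℤ) ∣ B2 ((h te1 : T1) : Fin 6 → ℤ) (t : Fin 6 → ℤ) := by
  have key := hB te1 (h.symm t)
  rw [LinearEquiv.apply_symm_apply] at key
  rw [key]
  refine ⟨((h.symm t : T1) : Fin 6 → ℤ) 0, ?_⟩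
  show B2 ((2:ℤ) • e1vec) _ = _
  simp [B2, e1vec, Pi.smul_apply]

lemma evec_pair_mem (i : Fin 6) (hi : i ≠ 0) : e1vec + evec i ∈ T1 := by
  rw [mem_T1_zmod, zmod2_Q2]
  have h : (e1vec + evec i) 0 + (e1vec + evec i) 1 + (e1vec + evec i) 2 +
      (e1vec + evec i) 3 + (e1vec + evec i) 4 + (e1vec + evec i) 5 = 2 := by
    simp only [Pi.add_apply, e1vec, evec]
    fin_cases i <;> simp_all
  rw [h]
  decide

lemma w_even {h : T1 ≃ₗ[ℤ] T1} (hB : ∀ v w : T1, B2 (h v) (h w) = B2 v w) :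
    ∀ i, (2:ℤ) ∣ ((h te1 : T1) : Fin 6 → ℤ) i := by
  set w : Fin 6 → ℤ := ((h te1 : T1) : Fin 6 → ℤ) with hw
  have hQ : Q2 w = 4 := by
    have := hB te1 te1
    rw [← Q2_eq_B2, ← Q2_eq_B2] at this
    rw [hw, this]
    show Q2 ((2:ℤ) • e1vec) = 4
    simp [Q2, e1vec, Pi.smul_apply]
  have hpair : ∀ i : Fin 6, i ≠ 0 → (2:ℤ) ∣ B2 w (e1vec + evec i) :=
    fun i hi => B2_w_even hB ⟨e1vec + evec i, evec_pair_mem i hi⟩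
  have h1 := hpair 1 (by decide)
  have h2 := hpair 2 (by decide)
  have h3 := hpair 3 (by decide)
  have h4 := hpair 4 (by decide)
  have h5 := hpair 5 (by decide)
  simp (config := { decide := true }) only [B2, Pi.add_apply, e1vec, evec] at h1 h2 h3 h4 h5
  norm_num at h1 h2 h3 h4 h5
  by_cases hd : (2:ℤ) ∣ w 0
  · have d1 : (2:ℤ) ∣ w 1 := by omega
    have d2 : (2:ℤ) ∣ w 2 := by omega
    have d3 : (2:ℤ) ∣ w 3 := by omega
    have d4 : (2:ℤ) ∣ w 4 := by omega
    have d5 : (2:ℤ) ∣ w 5 := by omega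
    intro i
    fin_cases i
    exacts [hd, d1, d2, d3, d4, d5]
  · exfalso
    obtain ⟨k0, hk0⟩ := odd_sq_mod8 hd
    obtain ⟨k1, hk1⟩ := odd_sq_mod8 (show ¬ (2:ℤ) ∣ w 1 by omega)
    obtain ⟨k2, hk2⟩ := odd_sq_mod8 (show ¬ (2:ℤ) ∣ w 2 by omega)
    obtain ⟨k3, hk3⟩ := odd_sq_mod8 (show ¬ (2:ℤ) ∣ w 3 by omega)
    obtain ⟨k4, hk4⟩ := odd_sq_mod8 (show ¬ (2:ℤ) ∣ w 4 by omega)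
    obtain ⟨k5, hk5⟩ := odd_sq_mod8 (show ¬ (2:ℤ) ∣ w 5 by omega)
    simp only [Q2] at hQ
    have : (6:ℤ) = 8 * (k0 + k1 - k2 - k3 - k4 - k5) := by
      linear_combination -hQ + hk0 + hk1 - hk2 - hk3 - hk4 - hk5
    omega

lemma uvec_spec {h : T1 ≃ₗ[ℤ] T1} (hB : ∀ v w : T1, B2 (h v) (h w) = B2 v w) :
    ∀ i, 2 * uvec h i = ((h te1 : T1) : Fin 6 → ℤ) i := by
  intro i
  exact Int.mul_ediv_cancel' (w_even hB i)

lemma uvec_spec' {h : T1 ≃ₗ[ℤ] T1} (hB : ∀ v w : T1, B2 (h v) (h w) = B2 v w) :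
    (2:ℤ) • uvec h = ((h te1 : T1) : Fin 6 → ℤ) := by
  funext i
  simpa [Pi.smul_apply, smul_eq_mul] using uvec_spec hB i

end Even
section ExtLemmas
open Matrix

lemma sL_even {t : Fin 6 → ℤ} (ht : t ∈ T1) : (2:ℤ) ∣ sL t := by
  rw [mem_T1_zmod, zmod2_Q2] at ht
  have h := ZMod.intCast_zmod_eq_zero_iff_dvd (sL t) 2
  norm_num at h
  exact h.mp ht

lemma tL_zero (v : Fin 6 → ℤ) : ((tL v : T1) : Fin 6 → ℤ) 0 = v 0 - sL v := by
  rw [tL_coe]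
  simp [Pi.sub_apply, Pi.smul_apply, e1vec]

lemma B2_te1 (x : Fin 6 → ℤ) : B2 x ((te1 : T1) : Fin 6 → ℤ) = 2 * x 0 := by
  show B2 x ((2:ℤ) • e1vec) = 2 * x 0
  simp [B2, e1vec, Pi.smul_apply]
  ring

lemma gL_agree {h : T1 ≃ₗ[ℤ] T1} (hB : ∀ v w : T1, B2 (h v) (h w) = B2 v w)
    (t : T1) : gL h (t : Fin 6 → ℤ) = ((h t : T1) : Fin 6 → ℤ) := by
  obtain ⟨k, hk⟩ := sL_even t.2
  have htL : tL (t : Fin 6 → ℤ) = t - k • te1 := by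
    apply Subtype.ext
    show (t : Fin 6 → ℤ) - sL (t : Fin 6 → ℤ) • e1vec
        = (t : Fin 6 → ℤ) - k • ((2:ℤ) • e1vec)
    rw [smul_smul, hk, mul_comm]
  rw [gL_apply, htL, map_sub, _root_.map_smul]
  show ((h t : T1) : Fin 6 → ℤ) - k • ((h te1 : T1) : Fin 6 → ℤ)
      + sL (t : Fin 6 → ℤ) • uvec h = _
  rw [hk]
  have h2 : (2 * k) • uvec h = k • ((2:ℤ) • uvec h) := by
    rw [smul_smul, mul_comm]
  rw [h2, uvec_spec' hB]
  abel

lemma gL_Q2 {h : T1 ≃ₗ[ℤ] T1} (hB : ∀ v w : T1, B2 (h v) (h w) = B2 v w)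
    (v : Fin 6 → ℤ) : Q2 (gL h v) = Q2 v := by
  have hQu : Q2 (uvec h) = 1 := by
    have h4 : Q2 ((2:ℤ) • uvec h) = 4 := by
      rw [uvec_spec' hB, Q2_eq_B2, hB te1 te1, ← Q2_eq_B2]
      show Q2 ((2:ℤ) • e1vec) = 4
      rw [Q2_smul, Q2_e1]; ring
    rw [Q2_smul] at h4
    linarith
  have hBtu : B2 ((h (tL v) : T1) : Fin 6 → ℤ) (uvec h) = v 0 - sL v := by
    have h2 : B2 ((h (tL v) : T1) : Fin 6 → ℤ) ((2:ℤ) • uvec h)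
        = 2 * B2 ((h (tL v) : T1) : Fin 6 → ℤ) (uvec h) := B2_smul_right 2 _ _
    rw [uvec_spec' hB, hB (tL v) te1, B2_te1, tL_zero] at h2
    linarith
  have hQt : Q2 ((h (tL v) : T1) : Fin 6 → ℤ) = Q2 ((tL v : T1) : Fin 6 → ℤ) := by
    rw [Q2_eq_B2, Q2_eq_B2, hB]
  have hv : v = ((tL v : T1) : Fin 6 → ℤ) + sL v • e1vec := by
    rw [tL_coe]; abel
  rw [gL_apply, Q2_add, Q2_smul, hQu, B2_smul_right, hBtu, hQt]
  conv_rhs => rw [hv]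
  rw [Q2_add, B2_smul_right, Q2_smul, Q2_e1, B2_e1, tL_zero]
  try ring

lemma gL_comp {h : T1 ≃ₗ[ℤ] T1} (hB : ∀ v w : T1, B2 (h v) (h w) = B2 v w)
    (hB' : ∀ v w : T1, B2 (h.symm v) (h.symm w) = B2 v w) (v : Fin 6 → ℤ) :
    gL h (gL h.symm v) = v := by
  rw [gL_apply h.symm v, map_add, _root_.map_smul,
    gL_agree hB (h.symm (tL v)), LinearEquiv.apply_symm_apply]
  have hu : gL h (uvec h.symm) = e1vec := by
    have h2 : (2:ℤ) • gL h (uvec h.symm) = (2:ℤ) • e1vec := by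
      rw [← _root_.map_smul, uvec_spec' hB', gL_agree hB (h.symm te1),
        LinearEquiv.apply_symm_apply]
      rfl
    funext i
    have h3 := congrFun h2 i
    simp only [Pi.smul_apply, smul_eq_mul] at h3
    linarith
  rw [hu, tL_coe]
  abel

end ExtLemmas
section Phi
open Matrix

/-- Restriction of `g ∈ O(Q₂)` to `T₁`, as a linear map. -/
def restL (g : OQ2) : T1 →ₗ[ℤ] T1 where
  toFun t := ⟨((g : (Matrix (Fin 6) (Fin 6) ℤ)ˣ) : Matrix (Fin 6) (Fin 6) ℤ).mulVec
    (t : Fin 6 → ℤ), mulVec_mem_T1 g t.2⟩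
  map_add' a b := Subtype.ext (by simp [Matrix.mulVec_add])
  map_smul' c a := Subtype.ext (by
    show ((g : (Matrix (Fin 6) (Fin 6) ℤ)ˣ) : Matrix (Fin 6) (Fin 6) ℤ).mulVec
        ((c • a : T1) : Fin 6 → ℤ)
      = c • ((g : (Matrix (Fin 6) (Fin 6) ℤ)ˣ) : Matrix (Fin 6) (Fin 6) ℤ).mulVec
        (a : Fin 6 → ℤ)
    rw [SetLike.val_smul]
    exact Matrix.mulVec_smul _ c _)

lemma mulVec_inv_cancel (g : OQ2) (v : Fin 6 → ℤ) :
    ((g : (Matrix (Fin 6) (Fin 6) ℤ)ˣ) : Matrix (Fin 6) (Fin 6) ℤ).mulVec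
      (((g⁻¹ : OQ2) : (Matrix (Fin 6) (Fin 6) ℤ)ˣ).val.mulVec v) = v := by
  rw [Matrix.mulVec_mulVec, ← Units.val_mul]
  norm_num

lemma mulVec_inv_cancel' (g : OQ2) (v : Fin 6 → ℤ) :
    (((g⁻¹ : OQ2) : (Matrix (Fin 6) (Fin 6) ℤ)ˣ) : Matrix (Fin 6) (Fin 6) ℤ).mulVec
      ((g : (Matrix (Fin 6) (Fin 6) ℤ)ˣ).val.mulVec v) = v := by
  rw [Matrix.mulVec_mulVec, ← Units.val_mul]
  norm_num

/-- Restriction of `g ∈ O(Q₂)` to `T₁`, as a linear equivalence. -/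
def Φ0 (g : OQ2) : T1 ≃ₗ[ℤ] T1 :=
  LinearEquiv.ofLinear (restL g) (restL g⁻¹)
    (LinearMap.ext fun t => Subtype.ext (mulVec_inv_cancel g t))
    (LinearMap.ext fun t => Subtype.ext (mulVec_inv_cancel' g t))

lemma Φ0_apply (g : OQ2) (t : T1) : ((Φ0 g t : T1) : Fin 6 → ℤ) =
    ((g : (Matrix (Fin 6) (Fin 6) ℤ)ˣ) : Matrix (Fin 6) (Fin 6) ℤ).mulVec (t : Fin 6 → ℤ) := rfl

/-- The restriction homomorphism. -/
def Φm : OQ2 →* (T1 ≃ₗ[ℤ] T1) where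
  toFun := Φ0
  map_one' := by
    apply LinearEquiv.ext
    intro t
    apply Subtype.ext
    show ((1 : (Matrix (Fin 6) (Fin 6) ℤ)ˣ) : Matrix (Fin 6) (Fin 6) ℤ).mulVec _ = _
    simp
  map_mul' a b := by
    apply LinearEquiv.ext
    intro t
    apply Subtype.ext
    show (((a * b : OQ2) : (Matrix (Fin 6) (Fin 6) ℤ)ˣ) : Matrix (Fin 6) (Fin 6) ℤ).mulVec _
      = ((a : (Matrix (Fin 6) (Fin 6) ℤ)ˣ) : Matrix (Fin 6) (Fin 6) ℤ).mulVec
        (((b : (Matrix (Fin 6) (Fin 6) ℤ)ˣ) : Matrix (Fin 6) (Fin 6) ℤ).mulVec _)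
    rw [Matrix.mulVec_mulVec]
    rfl

lemma mem_IsomT1 (h : T1 ≃ₗ[ℤ] T1) :
    h ∈ IsomT1 ↔ ∀ v w : T1, B2 (h v) (h w) = B2 v w := Iff.rfl

lemma mulVec_toMatrix' (f : (Fin 6 → ℤ) →ₗ[ℤ] (Fin 6 → ℤ)) (v : Fin 6 → ℤ) :
    (LinearMap.toMatrix' f).mulVec v = f v := by
  rw [← Matrix.toLin'_apply, Matrix.toLin'_toMatrix']

lemma evec_smul_mem (j : Fin 6) : (2:ℤ) • evec j ∈ T1 :=
  ⟨2 * Q2 (evec j), by rw [Q2_smul]; ring⟩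

lemma mulVec_evec (M : Matrix (Fin 6) (Fin 6) ℤ) (j i : Fin 6) :
    M.mulVec (evec j) i = M i j := by
  simp [Matrix.mulVec, dotProduct, evec, mul_ite]

end Phi
/-- Every `g ∈ O(Q₂)` maps `T₁` onto `T₁`, and restriction to `T₁` is a group
isomorphism from `O(Q₂)` onto the group of isometries of `(T₁, B₂)`; in particular every
isometry of `T₁` extends uniquely to an isometry of `(ℤ⁶, Q₂)`. -/
theorem restriction_to_even_sublattice_is_iso :
    (∀ g : OQ2, ∀ v : Fin 6 → ℤ, v ∈ T1 →
      ((g : (Matrix (Fin 6) (Fin 6) ℤ)ˣ) : Matrix (Fin 6) (Fin 6) ℤ).mulVec v ∈ T1) ∧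
    ∃ Φ : OQ2 →* (T1 ≃ₗ[ℤ] T1),
      (∀ (g : OQ2) (v : T1), ((Φ g) v : Fin 6 → ℤ) =
        ((g : (Matrix (Fin 6) (Fin 6) ℤ)ˣ) : Matrix (Fin 6) (Fin 6) ℤ).mulVec v) ∧
      Function.Injective Φ ∧
      Φ.range = IsomT1 := by
  refine ⟨fun g v hv => mulVec_mem_T1 g hv, Φm, fun g v => rfl, ?_, ?_⟩
  · -- injectivity
    rw [injective_iff_map_eq_one]
    intro g hg
    have key : ∀ j, ((g : (Matrix (Fin 6) (Fin 6) ℤ)ˣ) : Matrix (Fin 6) (Fin 6) ℤ).mulVec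
        (evec j) = evec j := by
      intro j
      have h2 := congrArg (fun e : T1 ≃ₗ[ℤ] T1 =>
        ((e ⟨(2:ℤ) • evec j, evec_smul_mem j⟩ : T1) : Fin 6 → ℤ)) hg
      have h3 : ((g : (Matrix (Fin 6) (Fin 6) ℤ)ˣ) : Matrix (Fin 6) (Fin 6) ℤ).mulVec
          ((2:ℤ) • evec j) = (2:ℤ) • evec j := h2
      rw [Matrix.mulVec_smul] at h3
      funext i
      have h4 := congrFun h3 i
      simp only [Pi.smul_apply, smul_eq_mul] at h4
      linarith
    apply Subtype.ext
    apply Units.ext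
    show ((g : (Matrix (Fin 6) (Fin 6) ℤ)ˣ) : Matrix (Fin 6) (Fin 6) ℤ) = 1
    ext i j
    have h5 := congrFun (key j) i
    rw [mulVec_evec] at h5
    rw [h5]
    simp [Matrix.one_apply, evec, eq_comm]
  · -- range
    ext h
    rw [MonoidHom.mem_range, mem_IsomT1]
    constructor
    · rintro ⟨g, rfl⟩ v w
      exact B2_mulVec g (v : Fin 6 → ℤ) (w : Fin 6 → ℤ)
    · intro hB
      have hB' : ∀ v w : T1, B2 (h.symm v) (h.symm w) = B2 v w := by
        intro v w
        calc B2 ((h.symm v : T1) : Fin 6 → ℤ) ((h.symm w : T1) : Fin 6 → ℤ)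
            = B2 ((h (h.symm v) : T1) : Fin 6 → ℤ) ((h (h.symm w) : T1) : Fin 6 → ℤ) :=
              (hB _ _).symm
          _ = B2 (v : Fin 6 → ℤ) (w : Fin 6 → ℤ) := by
              rw [LinearEquiv.apply_symm_apply, LinearEquiv.apply_symm_apply]
      have hB'' : ∀ v w : T1, B2 (h.symm.symm v) (h.symm.symm w) = B2 v w := by
        simpa [LinearEquiv.symm_symm] using hB
      set M := LinearMap.toMatrix' (gL h) with hM
      set M' := LinearMap.toMatrix' (gL h.symm) with hM'
      have hMM' : M * M' = 1 := by
        rw [hM, hM', ← LinearMap.toMatrix'_comp,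
          show (gL h) ∘ₗ (gL h.symm) = LinearMap.id from
            LinearMap.ext fun v => gL_comp hB hB' v, LinearMap.toMatrix'_id]
      have hM'M : M' * M = 1 := by
        rw [hM, hM', ← LinearMap.toMatrix'_comp,
          show (gL h.symm) ∘ₗ (gL h) = LinearMap.id from
            LinearMap.ext fun v => by
              have := gL_comp (h := h.symm) hB' hB'' v
              rwa [LinearEquiv.symm_symm] at this,
          LinearMap.toMatrix'_id]
      have gmem : (⟨M, M', hMM', hM'M⟩ : (Matrix (Fin 6) (Fin 6) ℤ)ˣ) ∈ OQ2 := by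
        intro v
        show Q2 (M.mulVec v) = Q2 v
        rw [hM, mulVec_toMatrix']
        exact gL_Q2 hB v
      refine ⟨⟨⟨M, M', hMM', hM'M⟩, gmem⟩, ?_⟩
      apply LinearEquiv.ext
      intro t
      apply Subtype.ext
      show M.mulVec (t : Fin 6 → ℤ) = ((h t : T1) : Fin 6 → ℤ)
      rw [hM, mulVec_toMatrix']
      exact gL_agree hB t
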